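/- The sequence a_n := 2·(n+1)/(n−1) · ∑_{j=1}^{n−1} (H_{j,1}² + H_{j,2}) / ((j+1)(j+2)), defined for integers n ≥ 2, is nondecreasing and converges as n → ∞ to 2π²/3. -/

import Mathlib

open Filter

/-- The `n`-th harmonic number `H_{n,1}`. -/
noncomputable def harm (n : ℕ) : ℝ := ∑ k ∈ Finset.Icc 1 n, 1 / (k : ℝ)

/-- The generalized harmonic number `H_{n,2}`. -/
noncomputable def harm2 (n : ℕ) : ℝ := ∑ k ∈ Finset.Icc 1 n, 1 / (k : ℝ) ^ 2

/-- `a_n = E[(U^{(n)} − τ^{(n)})²]`, the second moment of the time since coalescence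
of a random pair of tips of a Yule tree with `n` tips. -/
noncomputable def aSeq (n : ℕ) : ℝ :=
  2 * ((n : ℝ) + 1) / ((n : ℝ) - 1) *
    ∑ j ∈ Finset.Icc 1 (n - 1), ((harm j) ^ 2 + harm2 j) / (((j : ℝ) + 1) * ((j : ℝ) + 2))

open Real

lemma harm_succ (n : ℕ) : harm (n + 1) = harm n + 1 / ((n : ℝ) + 1) := by
  unfold harm
  rw [Finset.sum_Icc_succ_top (Nat.le_add_left 1 n)]
  push_cast
  ring

lemma harm2_succ (n : ℕ) : harm2 (n + 1) = harm2 n + 1 / ((n : ℝ) + 1) ^ 2 := by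
  unfold harm2
  rw [Finset.sum_Icc_succ_top (Nat.le_add_left 1 n)]
  push_cast
  ring

lemma harm_nonneg (n : ℕ) : 0 ≤ harm n :=
  Finset.sum_nonneg fun k _ => by positivity

lemma harm2_nonneg (n : ℕ) : 0 ≤ harm2 n :=
  Finset.sum_nonneg fun k _ => by positivity

lemma harm_mono : Monotone harm := by
  apply monotone_nat_of_le_succ
  intro n
  rw [harm_succ]
  have : 0 ≤ 1 / ((n : ℝ) + 1) := by positivity
  linarith

lemma harm2_eq_range (m : ℕ) : harm2 m = ∑ k ∈ Finset.range (m + 1), 1 / (k : ℝ) ^ 2 := by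
  induction m with
  | zero => simp [harm2]
  | succ n ih =>
      rw [Finset.sum_range_succ, ← ih, harm2_succ]
      push_cast
      ring

lemma harm2_le (m : ℕ) : harm2 m ≤ π ^ 2 / 6 := by
  rw [harm2_eq_range]
  exact sum_le_hasSum _ (fun i _ => by positivity) hasSum_zeta_two

lemma harm_eq_harmonic (n : ℕ) : harm n = (harmonic n : ℝ) := by
  rw [harm, harmonic_eq_sum_Icc]
  push_cast [one_div]
  rfl

lemma harm_le (n : ℕ) : harm n ≤ 1 + Real.log n := by
  rw [harm_eq_harmonic]; exact harmonic_le_one_add_log n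

lemma Ssum_eq (m : ℕ) :
    ∑ j ∈ Finset.Icc 1 m, ((harm j) ^ 2 + harm2 j) / (((j : ℝ) + 1) * ((j : ℝ) + 2))
      = 2 * harm2 m - ((harm m) ^ 2 + harm2 m) / ((m : ℝ) + 2) - 2 * harm m / ((m : ℝ) + 1) := by
  induction m with
  | zero => simp [harm, harm2]
  | succ n ih =>
      rw [Finset.sum_Icc_succ_top (Nat.le_add_left 1 n), ih, harm_succ, harm2_succ]
      have h1 : ((n : ℝ) + 1) ≠ 0 := by positivity
      have h2 : ((n : ℝ) + 2) ≠ 0 := by positivity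
      have h3 : ((n : ℝ) + 3) ≠ 0 := by positivity
      push_cast
      field_simp
      ring

lemma harm_five : harm 5 = 137 / 60 := by
  have h0 : harm 0 = 0 := by simp [harm]
  norm_num [show (5:ℕ) = 4+1 from rfl, show (4:ℕ) = 3+1 from rfl, show (3:ℕ) = 2+1 from rfl,
    show (2:ℕ) = 1+1 from rfl, show (1:ℕ) = 0+1 from rfl, harm_succ, h0]

lemma aSeq_eq {n : ℕ} (hn : 2 ≤ n) :
    aSeq n = 2 * ((n : ℝ) + 1) / ((n : ℝ) - 1) *
      (2 * harm2 (n - 1) - ((harm (n - 1)) ^ 2 + harm2 (n - 1)) / ((n : ℝ) + 1)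
        - 2 * harm (n - 1) / (n : ℝ)) := by
  have h1 : ((n - 1 : ℕ) : ℝ) = (n : ℝ) - 1 := by
    have : 1 ≤ n := le_trans one_le_two hn
    push_cast [this]
    ring
  rw [aSeq, Ssum_eq, h1, show (n : ℝ) - 1 + 2 = (n : ℝ) + 1 by ring,
    show (n : ℝ) - 1 + 1 = (n : ℝ) by ring]

lemma key_ineq {m : ℕ} (hm : 1 ≤ m) :
    3 * harm2 m ≤ (harm m) ^ 2 + 4 * harm m / ((m : ℝ) + 1) := by
  have h0 : harm 0 = 0 := by simp [harm]
  have k0 : harm2 0 = 0 := by simp [harm2]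
  match m, hm with
  | 1, _ => norm_num [show (1:ℕ) = 0+1 from rfl, harm_succ, harm2_succ, h0, k0]
  | 2, _ => norm_num [show (2:ℕ) = 0+1+1 from rfl, harm_succ, harm2_succ, h0, k0]
  | 3, _ => norm_num [show (3:ℕ) = 0+1+1+1 from rfl, harm_succ, harm2_succ, h0, k0]
  | 4, _ => norm_num [show (4:ℕ) = 0+1+1+1+1 from rfl, harm_succ, harm2_succ, h0, k0]
  | (m+5), _ =>
    have hH : (137 / 60 : ℝ) ≤ harm (m + 5) := harm_five ▸ harm_mono (by omega)
    have hK : harm2 (m + 5) ≤ π ^ 2 / 6 := harm2_le _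
    have hpi : π < 3.15 := Real.pi_lt_d2
    have hpi0 : 0 < π := Real.pi_pos
    have hH0 : 0 ≤ harm (m + 5) := harm_nonneg _
    have hdiv : 0 ≤ 4 * harm (m + 5) / (((m+5 : ℕ) : ℝ) + 1) := by positivity
    nlinarith [sq_nonneg (harm (m + 5) - 137 / 60), sq_nonneg (π - 3.15)]

lemma mono_step (n : ℕ) (hn : 2 ≤ n) : aSeq n ≤ aSeq (n + 1) := by
  have hn1 : 1 ≤ n := le_trans one_le_two hn
  have hnR : (2 : ℝ) ≤ (n : ℝ) := by exact_mod_cast hn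
  have h1 : ((n - 1 : ℕ) : ℝ) = (n : ℝ) - 1 := by push_cast [hn1]; ring
  set H := harm (n - 1) with hHdef
  set K := harm2 (n - 1) with hKdef
  have hHn : harm n = H + 1 / (n : ℝ) := by
    conv_lhs => rw [← Nat.sub_add_cancel hn1]
    rw [harm_succ, h1]
    ring_nf
    linarith [hHdef]
  have hKn : harm2 n = K + 1 / (n : ℝ) ^ 2 := by
    conv_lhs => rw [← Nat.sub_add_cancel hn1]
    rw [harm2_succ, h1]
    ring_nf
    linarith [hKdef]
  have hkey : 3 * K ≤ H ^ 2 + 4 * H / (n : ℝ) := by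
    have := key_ineq (m := n - 1) (by omega)
    rwa [h1, show (n : ℝ) - 1 + 1 = (n : ℝ) by ring] at this
  have hH0 : 0 ≤ H := harm_nonneg _
  have hD : 0 ≤ ((n:ℝ)+1) * H^2 + 2*H*((n:ℝ)-1)/(n:ℝ) + 4*((n:ℝ)+1)*H/(n:ℝ)
      + 2*((n:ℝ)-1)/(n:ℝ)^2 - 3*((n:ℝ)+1)*K := by
    have t1 : 0 ≤ ((n:ℝ)+1) * (H^2 + 4*H/(n:ℝ) - 3*K) :=
      mul_nonneg (by linarith) (by linarith)
    have t2 : 0 ≤ 2*H*((n:ℝ)-1)/(n:ℝ) :=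
      div_nonneg (by nlinarith) (by linarith)
    have t3 : 0 ≤ 2*((n:ℝ)-1)/(n:ℝ)^2 := by
      apply div_nonneg (by linarith) (by positivity)
    have expand : ((n:ℝ)+1) * (H^2 + 4*H/(n:ℝ) - 3*K) + 2*H*((n:ℝ)-1)/(n:ℝ)
        + 2*((n:ℝ)-1)/(n:ℝ)^2
        = ((n:ℝ)+1) * H^2 + 2*H*((n:ℝ)-1)/(n:ℝ) + 4*((n:ℝ)+1)*H/(n:ℝ)
          + 2*((n:ℝ)-1)/(n:ℝ)^2 - 3*((n:ℝ)+1)*K := by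
      field_simp
      ring
    linarith [t1, t2, t3]
  have e0 : (0:ℝ) < (n:ℝ) - 1 := by linarith
  have e1 : ((n:ℝ)) ≠ 0 := by linarith
  have e2 : ((n:ℝ) - 1) ≠ 0 := by linarith
  have e3 : ((n:ℝ) + 1) ≠ 0 := by linarith
  have e4 : ((n:ℝ) + 2) ≠ 0 := by linarith
  have hdiff : aSeq (n + 1) - aSeq n =
      2 * (((n:ℝ)+1) * H^2 + 2*H*((n:ℝ)-1)/(n:ℝ) + 4*((n:ℝ)+1)*H/(n:ℝ)
        + 2*((n:ℝ)-1)/(n:ℝ)^2 - 3*((n:ℝ)+1)*K)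
      / ((n:ℝ) * ((n:ℝ)-1) * ((n:ℝ)+1)) := by
    rw [aSeq_eq hn, aSeq_eq (show 2 ≤ n + 1 by omega)]
    simp only [Nat.add_sub_cancel, hHn, hKn]
    rw [← hHdef, ← hKdef]
    push_cast
    have e5 : ((n:ℝ) + 1 - 1) ≠ 0 := by linarith
    have e6 : ((n:ℝ) + 1 + 1) ≠ 0 := by linarith
    field_simp
    ring
  have hpos : 0 ≤ aSeq (n + 1) - aSeq n := by
    rw [hdiff]
    apply div_nonneg (by linarith) (by positivity)
  linarith

lemma aSeq_tendsto : Tendsto aSeq atTop (nhds (2 * Real.pi ^ 2 / 3)) := by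
  have hden : Tendsto (fun n : ℕ => (n : ℝ) - 1) atTop atTop := by
    have := tendsto_atTop_add_const_right atTop (-1 : ℝ) tendsto_natCast_atTop_atTop
    simpa [sub_eq_add_neg] using this
  have hA : Tendsto (fun n : ℕ => 2 * ((n : ℝ) + 1) / ((n : ℝ) - 1)) atTop (nhds 2) := by
    have h0 : Tendsto (fun n : ℕ => (4 : ℝ) / ((n : ℝ) - 1)) atTop (nhds 0) :=
      Tendsto.div_atTop tendsto_const_nhds hden
    have h2 : Tendsto (fun n : ℕ => 2 + (4 : ℝ) / ((n : ℝ) - 1)) atTop (nhds 2) := by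
      simpa using h0.const_add 2
    apply h2.congr'
    filter_upwards [eventually_ge_atTop 2] with n hn
    have : ((n : ℝ) - 1) ≠ 0 := by
      have : (2 : ℝ) ≤ (n : ℝ) := by exact_mod_cast hn
      linarith
    field_simp
    ring
  have hK : Tendsto (fun n : ℕ => harm2 (n - 1)) atTop (nhds (π ^ 2 / 6)) := by
    have h1 : Tendsto (fun m : ℕ => ∑ k ∈ Finset.range m, 1 / (k : ℝ) ^ 2) atTop
        (nhds (π ^ 2 / 6)) := hasSum_zeta_two.tendsto_sum_nat
    have h2 : Tendsto (fun m : ℕ => harm2 m) atTop (nhds (π ^ 2 / 6)) := by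
      have := h1.comp (tendsto_add_atTop_nat 1)
      simpa [Function.comp_def, harm2_eq_range] using this
    exact h2.comp (tendsto_sub_atTop_nat 1)
  have hlog2 : Tendsto (fun x : ℝ => ((1 + Real.log x) ^ 2 + 2) / (x + 1)) atTop (nhds 0) := by
    have l1 : Tendsto (fun x : ℝ => Real.log x ^ 2 / (1 * x + 1)) atTop (nhds 0) :=
      Real.tendsto_pow_log_div_mul_add_atTop 1 1 2 one_ne_zero
    have l2 : Tendsto (fun x : ℝ => Real.log x ^ 1 / (1 * x + 1)) atTop (nhds 0) :=
      Real.tendsto_pow_log_div_mul_add_atTop 1 1 1 one_ne_zero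
    have l3 : Tendsto (fun x : ℝ => (3 : ℝ) / (x + 1)) atTop (nhds 0) :=
      Tendsto.div_atTop tendsto_const_nhds (tendsto_atTop_add_const_right _ 1 tendsto_id)
    have := (l1.add (l2.const_mul 2)).add l3
    simp only [one_mul] at this
    have h0 : (0 : ℝ) + 2 * 0 + 0 = 0 := by norm_num
    rw [h0] at this
    apply this.congr
    intro x
    ring
  have hlog1 : Tendsto (fun x : ℝ => (2 + 2 * Real.log x) / x) atTop (nhds 0) := by
    have l2 : Tendsto (fun x : ℝ => Real.log x ^ 1 / (1 * x + 0)) atTop (nhds 0) :=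
      Real.tendsto_pow_log_div_mul_add_atTop 1 0 1 one_ne_zero
    have l3 : Tendsto (fun x : ℝ => (2 : ℝ) / x) atTop (nhds 0) :=
      Tendsto.div_atTop tendsto_const_nhds tendsto_id
    have := l3.add (l2.const_mul 2)
    simp only [one_mul, pow_one, add_zero] at this
    rw [show (0 : ℝ) + 2 * 0 = 0 by norm_num] at this
    apply this.congr
    intro x
    ring
  have hB : Tendsto (fun n : ℕ => ((harm (n - 1)) ^ 2 + harm2 (n - 1)) / ((n : ℝ) + 1))
      atTop (nhds 0) := by
    apply squeeze_zero' (g := fun n : ℕ => ((1 + Real.log (n : ℝ)) ^ 2 + 2) / ((n : ℝ) + 1))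
    · filter_upwards [eventually_ge_atTop 1] with n _
      have := harm_nonneg (n - 1); have := harm2_nonneg (n - 1)
      positivity
    · filter_upwards [eventually_ge_atTop 2] with n hn
      have hn2 : (2 : ℝ) ≤ (n : ℝ) := by exact_mod_cast hn
      have hlogle : Real.log ((n - 1 : ℕ) : ℝ) ≤ Real.log (n : ℝ) := by
        apply Real.log_le_log (by
          have : (1 : ℕ) ≤ n - 1 := by omega
          exact_mod_cast Nat.lt_of_lt_of_le Nat.zero_lt_one this)
        exact_mod_cast Nat.sub_le n 1
      have hHle : harm (n - 1) ≤ 1 + Real.log (n : ℝ) := (harm_le _).trans (by linarith)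
      have hlogpos : 0 ≤ Real.log (n : ℝ) :=
        Real.log_nonneg (by linarith)
      have hH0 : 0 ≤ harm (n - 1) := harm_nonneg _
      have hsq : (harm (n - 1)) ^ 2 ≤ (1 + Real.log (n : ℝ)) ^ 2 := by nlinarith
      have hK2 : harm2 (n - 1) ≤ 2 := by
        have := harm2_le (n - 1)
        have hpi : π < 3.15 := Real.pi_lt_d2
        have hpi0 : 0 < π := Real.pi_pos
        nlinarith
      have hden0 : (0 : ℝ) < (n : ℝ) + 1 := by linarith
      gcongr
    · exact hlog2.comp tendsto_natCast_atTop_atTop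
  have hC : Tendsto (fun n : ℕ => 2 * harm (n - 1) / (n : ℝ)) atTop (nhds 0) := by
    apply squeeze_zero' (g := fun n : ℕ => (2 + 2 * Real.log (n : ℝ)) / (n : ℝ))
    · filter_upwards [eventually_ge_atTop 1] with n _
      have := harm_nonneg (n - 1)
      positivity
    · filter_upwards [eventually_ge_atTop 2] with n hn
      have hn2 : (2 : ℝ) ≤ (n : ℝ) := by exact_mod_cast hn
      have hlogle : Real.log ((n - 1 : ℕ) : ℝ) ≤ Real.log (n : ℝ) := by
        apply Real.log_le_log (by
          have : (1 : ℕ) ≤ n - 1 := by omega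
          exact_mod_cast Nat.lt_of_lt_of_le Nat.zero_lt_one this)
        exact_mod_cast Nat.sub_le n 1
      have hHle : harm (n - 1) ≤ 1 + Real.log (n : ℝ) := (harm_le _).trans (by linarith)
      have hden0 : (0 : ℝ) < (n : ℝ) := by linarith
      gcongr
      linarith
    · exact hlog1.comp tendsto_natCast_atTop_atTop
  have hfull : Tendsto (fun n : ℕ => 2 * ((n : ℝ) + 1) / ((n : ℝ) - 1) *
      (2 * harm2 (n - 1) - ((harm (n - 1)) ^ 2 + harm2 (n - 1)) / ((n : ℝ) + 1)
        - 2 * harm (n - 1) / (n : ℝ))) atTop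
      (nhds (2 * (2 * (π ^ 2 / 6) - 0 - 0))) :=
    hA.mul (((hK.const_mul 2).sub hB).sub hC)
  rw [show 2 * (2 * (π ^ 2 / 6) - 0 - 0) = 2 * π ^ 2 / 3 by ring] at hfull
  apply hfull.congr'
  filter_upwards [eventually_ge_atTop 2] with n hn
  exact (aSeq_eq hn).symm

/-- `a_n` is nondecreasing (for `n ≥ 2`) and converges to `2π²/3`. -/
theorem stmt12 :
    (∀ n : ℕ, 2 ≤ n → aSeq n ≤ aSeq (n + 1)) ∧
    Tendsto aSeq atTop (nhds (2 * Real.pi ^ 2 / 3)) := by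
  exact ⟨mono_step, aSeq_tendsto⟩
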